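/- With A_ρ̂ and B^ω defined as above on ℂ[W] via homomorphisms d^{-1}: V → W and d^0: W → U satisfying d^0 ∘ d^{-1} = 0, the operators commute pairwise: A_ρ̂ B^ω = B^ω A_ρ̂ for all ρ̂ ∈ V̂ and ω ∈ U. -/
import Mathlib


variable {V W U : Type*} [AddCommGroup V] [Fintype V] [DecidableEq V]
  [AddCommGroup W] [Fintype W] [DecidableEq W]
  [AddCommGroup U] [Fintype U] [DecidableEq U]

/-- The shift operator `P^w : |ω⟩ ↦ |ω + w⟩` on `ℂ[W]`. -/
noncomputable def shiftOp (w : W) : EuclideanSpace ℂ W →ₗ[ℂ] EuclideanSpace ℂ W :=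
  (EuclideanSpace.equiv W ℂ).symm.toLinearMap ∘ₗ
    (LinearMap.funLeft ℂ ℂ (fun x => x - w)) ∘ₗ (EuclideanSpace.equiv W ℂ).toLinearMap

/-- The clock operator `Q_χ : |ν⟩ ↦ χ(ν)|ν⟩` on `ℂ[W]`. -/
noncomputable def clockOp (χ : AddChar W ℂˣ) :
    EuclideanSpace ℂ W →ₗ[ℂ] EuclideanSpace ℂ W :=
  (EuclideanSpace.equiv W ℂ).symm.toLinearMap ∘ₗ
    { toFun := fun f x => ((χ x : ℂˣ) : ℂ) * f x
      map_add' := by intro f g; funext x; simp [mul_add]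
      map_smul' := by intro c f; funext x; simp [smul_eq_mul]; ring } ∘ₗ
    (EuclideanSpace.equiv W ℂ).toLinearMap

/-- The fake-gauge operator `A_ρ̂ := (1/|V|) Σ_{α∈V} ρ̂(α)⁻¹ P^{d⁻¹ α}`. -/
noncomputable def gaugeOp (d : V →+ W) (ρ : AddChar V ℂˣ) :
    EuclideanSpace ℂ W →ₗ[ℂ] EuclideanSpace ℂ W :=
  (Fintype.card V : ℂ)⁻¹ • ∑ α : V, ((((ρ α)⁻¹ : ℂˣ) : ℂ)) • shiftOp (d α)

/-- The fake-holonomy operator `B^ω := (1/|Û|) Σ_{β̂∈Û} β̂(ω)⁻¹ Q_{β̂∘d⁰}`. -/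
noncomputable def holOp [Fintype (AddChar U ℂˣ)] (d : W →+ U) (ω : U) :
    EuclideanSpace ℂ W →ₗ[ℂ] EuclideanSpace ℂ W :=
  (Fintype.card (AddChar U ℂˣ) : ℂ)⁻¹ •
    ∑ β : AddChar U ℂˣ, ((((β ω)⁻¹ : ℂˣ) : ℂ)) • clockOp (β.compAddMonoidHom d)

lemma shift_clock_comm (w : W) (χ : AddChar W ℂˣ) (h : χ w = 1) :
    (clockOp χ).comp (shiftOp w) = (shiftOp w).comp (clockOp χ) := by
  ext f x
  have hx : χ (x - w) = χ x := by
    rw [sub_eq_add_neg, AddChar.map_add_eq_mul, AddChar.map_neg_eq_inv, h, inv_one, mul_one]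
  simp only [clockOp, shiftOp, LinearMap.comp_apply, LinearMap.coe_mk, AddHom.coe_mk,
    LinearEquiv.coe_toLinearMap, LinearMap.funLeft_apply]
  simp [EuclideanSpace.equiv, hx, LinearMap.funLeft_apply, PiLp.continuousLinearEquiv]

/-- With `d⁰ ∘ d⁻¹ = 0`, the fake-gauge and fake-holonomy operators
commute pairwise: `A_ρ̂ B^ω = B^ω A_ρ̂` for all `ρ̂ ∈ V̂` and `ω ∈ U`. -/
theorem stmt8 [Fintype (AddChar U ℂˣ)] (dm1 : V →+ W) (d0 : W →+ U)
    (hdd : d0.comp dm1 = 0) (ρ : AddChar V ℂˣ) (ω : U) :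
    (gaugeOp dm1 ρ).comp (holOp d0 ω) = (holOp d0 ω).comp (gaugeOp dm1 ρ) := by
  rw [← Module.End.mul_eq_comp, ← Module.End.mul_eq_comp]
  unfold gaugeOp holOp
  have key : Commute (∑ α : V, ((((ρ α)⁻¹ : ℂˣ) : ℂ)) • shiftOp (dm1 α))
      (∑ β : AddChar U ℂˣ, ((((β ω)⁻¹ : ℂˣ) : ℂ)) • clockOp (β.compAddMonoidHom d0)) := by
    refine Commute.sum_left _ _ _ (fun α _ => Commute.sum_right _ _ _ (fun β _ => ?_))
    have h1 : (β.compAddMonoidHom d0) (dm1 α) = 1 := by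
      have : d0 (dm1 α) = 0 := by
        have := DFunLike.congr_fun hdd α
        simpa using this
      simp [AddChar.compAddMonoidHom, this]
    have h := shift_clock_comm (dm1 α) (β.compAddMonoidHom d0) h1
    have hc : Commute (shiftOp (dm1 α)) (clockOp (β.compAddMonoidHom d0)) := by
      unfold Commute SemiconjBy
      rw [Module.End.mul_eq_comp, Module.End.mul_eq_comp, h]
    exact (hc.smul_left _).smul_right _
  exact ((key.smul_left _).smul_right _).eq
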